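/- Let k > 0 be a real number with k ≠ 1. Define g : (Fin 3 → ℝ) → (Fin 3 → ℝ) by, writing p(i) = softmax(w)(i): g(w)(0) = −(1 − p(0))^k, and g(w)(j) = ((1 − p(0))^k / (p(1)^k + p(2)^k)) · p(j)^k for j ∈ {1, 2} (real powers). Then there is no function F : (Fin 3 → ℝ) → ℝ that is differentiable at every point and whose partial derivative at every w in every coordinate j equals g(w)(j). That is, the pseudo-gradient g with sensitivity parameter k ≠ 1 is not the gradient of any cost function. -/

import Mathlib

noncomputable def softmax {n : ℕ} (z : Fin n → ℝ) (j : Fin n) : ℝ :=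
  Real.exp (z j) / ∑ i, Real.exp (z i)

noncomputable def pseudoGrad (k : ℝ) (w : Fin 3 → ℝ) (j : Fin 3) : ℝ :=
  if j = 0 then -((1 - softmax w 0) ^ k)
  else ((1 - softmax w 0) ^ k / (softmax w 1 ^ k + softmax w 2 ^ k)) * softmax w j ^ k

open Real

noncomputable def pgS (w : Fin 3 → ℝ) : ℝ := exp (w 0) + exp (w 1) + exp (w 2)

lemma pgS_pos (w : Fin 3 → ℝ) : 0 < pgS w := by unfold pgS; positivity

noncomputable def pgQ (w : Fin 3 → ℝ) : ℝ := (exp (w 1) + exp (w 2)) / pgS w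

lemma pgQ_pos (w : Fin 3 → ℝ) : 0 < pgQ w := div_pos (by positivity) (pgS_pos w)

noncomputable def pgG0 (k : ℝ) (w : Fin 3 → ℝ) : ℝ := -(pgQ w ^ k)
noncomputable def pgG1 (k : ℝ) (w : Fin 3 → ℝ) : ℝ :=
  pgQ w ^ k * (exp (k * w 1) / (exp (k * w 1) + exp (k * w 2)))
noncomputable def pgG2 (k : ℝ) (w : Fin 3 → ℝ) : ℝ :=
  pgQ w ^ k * (exp (k * w 2) / (exp (k * w 1) + exp (k * w 2)))

lemma softmax_eq (w : Fin 3 → ℝ) (j : Fin 3) : softmax w j = exp (w j) / pgS w := by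
  simp [softmax, pgS, Fin.sum_univ_three]

lemma one_sub_softmax (w : Fin 3 → ℝ) : 1 - softmax w 0 = pgQ w := by
  rw [softmax_eq, pgQ, eq_div_iff (pgS_pos w).ne', sub_mul, div_mul_cancel₀ _ (pgS_pos w).ne']
  unfold pgS; ring

lemma softmax_rpow (k : ℝ) (w : Fin 3 → ℝ) (j : Fin 3) :
    softmax w j ^ k = exp (k * w j) / pgS w ^ k := by
  rw [softmax_eq, Real.div_rpow (exp_pos _).le (pgS_pos w).le, mul_comm k, Real.exp_mul]

lemma pseudoGrad_zero (k : ℝ) (w : Fin 3 → ℝ) : pseudoGrad k w 0 = pgG0 k w := by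
  simp [pseudoGrad, pgG0, one_sub_softmax]

lemma pseudoGrad_one (k : ℝ) (w : Fin 3 → ℝ) : pseudoGrad k w 1 = pgG1 k w := by
  have hSk : (0:ℝ) < pgS w ^ k := rpow_pos_of_pos (pgS_pos w) k
  have hT : (0:ℝ) < exp (k * w 1) + exp (k * w 2) := by positivity
  rw [pseudoGrad, if_neg (by decide), one_sub_softmax, softmax_rpow, softmax_rpow, pgG1]
  field_simp

lemma pseudoGrad_two (k : ℝ) (w : Fin 3 → ℝ) : pseudoGrad k w 2 = pgG2 k w := by
  have hSk : (0:ℝ) < pgS w ^ k := rpow_pos_of_pos (pgS_pos w) k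
  have hT : (0:ℝ) < exp (k * w 1) + exp (k * w 2) := by positivity
  rw [pseudoGrad, if_neg (by decide), one_sub_softmax, softmax_rpow, softmax_rpow, pgG2]
  field_simp

lemma coord_diff (j : Fin 3) (w : Fin 3 → ℝ) :
    DifferentiableAt ℝ (fun w : Fin 3 → ℝ => w j) w :=
  (ContinuousLinearMap.proj j : (Fin 3 → ℝ) →L[ℝ] ℝ).differentiableAt

lemma pgS_diff (w : Fin 3 → ℝ) : DifferentiableAt ℝ pgS w := by
  unfold pgS
  exact (((coord_diff 0 w).exp.add (coord_diff 1 w).exp)).add (coord_diff 2 w).exp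

lemma pgQ_diff (w : Fin 3 → ℝ) : DifferentiableAt ℝ pgQ w := by
  unfold pgQ
  simp only [div_eq_mul_inv]
  exact ((coord_diff 1 w).exp.add (coord_diff 2 w).exp).mul
    ((pgS_diff w).inv (pgS_pos w).ne')

lemma pgQk_diff (k : ℝ) (w : Fin 3 → ℝ) :
    DifferentiableAt ℝ (fun w => pgQ w ^ k) w :=
  (pgQ_diff w).rpow_const (Or.inl (pgQ_pos w).ne')

lemma pgE_diff (k : ℝ) (j : Fin 3) (w : Fin 3 → ℝ) :
    DifferentiableAt ℝ (fun w : Fin 3 → ℝ => Real.exp (k * w j)) w :=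
  ((coord_diff j w).const_mul k).exp

lemma pgG0_diff (k : ℝ) (w : Fin 3 → ℝ) : DifferentiableAt ℝ (pgG0 k) w := by
  unfold pgG0; exact (pgQk_diff k w).neg

lemma pgT_pos (k : ℝ) (w : Fin 3 → ℝ) : (0:ℝ) < exp (k * w 1) + exp (k * w 2) := by
  positivity

lemma pgG1_diff (k : ℝ) (w : Fin 3 → ℝ) : DifferentiableAt ℝ (pgG1 k) w := by
  unfold pgG1
  apply (pgQk_diff k w).mul
  simp only [div_eq_mul_inv]
  exact (pgE_diff k 1 w).mul
    (((pgE_diff k 1 w).add (pgE_diff k 2 w)).inv (pgT_pos k w).ne')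

lemma pgG2_diff (k : ℝ) (w : Fin 3 → ℝ) : DifferentiableAt ℝ (pgG2 k) w := by
  unfold pgG2
  apply (pgQk_diff k w).mul
  simp only [div_eq_mul_inv]
  exact (pgE_diff k 2 w).mul
    (((pgE_diff k 1 w).add (pgE_diff k 2 w)).inv (pgT_pos k w).ne')

noncomputable def pgX : Fin 3 → ℝ := fun i => if i = 2 then Real.log 2 else 0

lemma pgPhi_eq (k : ℝ) :
    (fun t : ℝ => pgG1 k (pgX + t • (Pi.single 2 1 : Fin 3 → ℝ))) =
      fun t : ℝ => ((1 + exp (Real.log 2 + t)) / (1 + 1 + exp (Real.log 2 + t))) ^ k *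
        (1 / (1 + exp (k * (Real.log 2 + t)))) := by
  funext t
  have h0 : (pgX + t • (Pi.single 2 1 : Fin 3 → ℝ)) 0 = 0 := by
    simp [pgX, Pi.single_apply]
  have h1 : (pgX + t • (Pi.single 2 1 : Fin 3 → ℝ)) 1 = 0 := by
    simp [pgX, Pi.single_apply]
  have h2 : (pgX + t • (Pi.single 2 1 : Fin 3 → ℝ)) 2 = Real.log 2 + t := by
    simp [pgX, Pi.single_apply]
  rw [pgG1, pgQ, pgS, h0, h1, h2]
  simp [Real.exp_zero]

lemma pgPsi_eq (k : ℝ) :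
    (fun t : ℝ => pgG2 k (pgX + t • (Pi.single 1 1 : Fin 3 → ℝ))) =
      fun t : ℝ => ((exp t + exp (Real.log 2)) / (1 + exp t + exp (Real.log 2))) ^ k *
        (exp (k * Real.log 2) / (exp (k * t) + exp (k * Real.log 2))) := by
  funext t
  have h0 : (pgX + t • (Pi.single 1 1 : Fin 3 → ℝ)) 0 = 0 := by
    simp [pgX, Pi.single_apply]
  have h1 : (pgX + t • (Pi.single 1 1 : Fin 3 → ℝ)) 1 = t := by
    simp [pgX, Pi.single_apply]
  have h2 : (pgX + t • (Pi.single 1 1 : Fin 3 → ℝ)) 2 = Real.log 2 := by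
    simp [pgX, Pi.single_apply]
  rw [pgG2, pgQ, pgS, h0, h1, h2]
  simp [Real.exp_zero]

lemma pg_exp_log_two : Real.exp (Real.log 2) = 2 := Real.exp_log (by norm_num)

lemma pgDerivPhi (k : ℝ) :
    HasDerivAt (fun t : ℝ => ((1 + exp (Real.log 2 + t)) / (1 + 1 + exp (Real.log 2 + t))) ^ k *
        (1 / (1 + exp (k * (Real.log 2 + t)))))
      (k * (3/4) ^ (k-1) * (1/8) * (1 / (1 + exp (k * Real.log 2))) +
        (3/4) ^ k * (-(exp (k * Real.log 2) * k) / (1 + exp (k * Real.log 2)) ^ 2)) 0 := by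
  have h2 := pg_exp_log_two
  have hu : HasDerivAt (fun t : ℝ => exp (Real.log 2 + t)) 2 0 := by
    simpa [h2] using ((hasDerivAt_id (0:ℝ)).const_add (Real.log 2)).exp
  have hnum : HasDerivAt (fun t : ℝ => 1 + exp (Real.log 2 + t)) 2 0 := hu.const_add 1
  have hden : HasDerivAt (fun t : ℝ => 1 + 1 + exp (Real.log 2 + t)) 2 0 := hu.const_add (1+1)
  have hdne : (1:ℝ) + 1 + exp (Real.log 2 + 0) ≠ 0 := by norm_num [h2]
  have hq : HasDerivAt
      (fun t : ℝ => (1 + exp (Real.log 2 + t)) / (1 + 1 + exp (Real.log 2 + t))) (1/8) 0 := by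
    have h := hnum.div hden hdne
    refine h.congr_deriv ?_
    norm_num [h2]
  have hq0 : (1 + exp (Real.log 2 + (0:ℝ))) / (1 + 1 + exp (Real.log 2 + (0:ℝ))) = 3/4 := by
    norm_num [h2]
  have hqk : HasDerivAt
      (fun t : ℝ => ((1 + exp (Real.log 2 + t)) / (1 + 1 + exp (Real.log 2 + t))) ^ k)
      (k * (3/4) ^ (k-1) * (1/8)) 0 := by
    have h := hq.rpow_const (p := k) (Or.inl (by norm_num [h2]))
    rw [hq0] at h
    convert h using 1
    ring
  have hi : HasDerivAt (fun t : ℝ => k * (Real.log 2 + t)) k 0 := by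
    simpa using ((hasDerivAt_id (0:ℝ)).const_add (Real.log 2)).const_mul k
  have he2 : HasDerivAt (fun t : ℝ => exp (k * (Real.log 2 + t)))
      (exp (k * Real.log 2) * k) 0 := by
    simpa using hi.exp
  have hrden : HasDerivAt (fun t : ℝ => 1 + exp (k * (Real.log 2 + t)))
      (exp (k * Real.log 2) * k) 0 := he2.const_add 1
  have hrne : (1:ℝ) + exp (k * (Real.log 2 + 0)) ≠ 0 := by positivity
  have hr : HasDerivAt (fun t : ℝ => 1 / (1 + exp (k * (Real.log 2 + t))))
      (-(exp (k * Real.log 2) * k) / (1 + exp (k * Real.log 2)) ^ 2) 0 := by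
    have h := (hasDerivAt_const (0:ℝ) (1:ℝ)).div hrden hrne
    refine h.congr_deriv ?_
    rw [add_zero]
    ring
  have h := hqk.mul hr
  refine h.congr_deriv ?_
  rw [hq0]
  simp only [add_zero]

lemma pgDerivPsi (k : ℝ) :
    HasDerivAt (fun t : ℝ => ((exp t + exp (Real.log 2)) / (1 + exp t + exp (Real.log 2))) ^ k *
        (exp (k * Real.log 2) / (exp (k * t) + exp (k * Real.log 2))))
      (k * (3/4) ^ (k-1) * (1/16) * (exp (k * Real.log 2) / (1 + exp (k * Real.log 2))) +
        (3/4) ^ k * (-(exp (k * Real.log 2) * k) / (1 + exp (k * Real.log 2)) ^ 2)) 0 := by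
  have h2 := pg_exp_log_two
  have hu : HasDerivAt (fun t : ℝ => exp t) 1 0 := by
    simpa using Real.hasDerivAt_exp 0
  have hnum : HasDerivAt (fun t : ℝ => exp t + exp (Real.log 2)) 1 0 :=
    hu.add_const _
  have hden : HasDerivAt (fun t : ℝ => 1 + exp t + exp (Real.log 2)) 1 0 :=
    (hu.const_add 1).add_const _
  have hdne : (1:ℝ) + exp 0 + exp (Real.log 2) ≠ 0 := by positivity
  have hq : HasDerivAt
      (fun t : ℝ => (exp t + exp (Real.log 2)) / (1 + exp t + exp (Real.log 2))) (1/16) 0 := by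
    have h := hnum.div hden hdne
    refine h.congr_deriv ?_
    norm_num [h2]
  have hq0 : (exp 0 + exp (Real.log 2)) / (1 + exp 0 + exp (Real.log 2)) = 3/4 := by
    norm_num [h2]
  have hqk : HasDerivAt
      (fun t : ℝ => ((exp t + exp (Real.log 2)) / (1 + exp t + exp (Real.log 2))) ^ k)
      (k * (3/4) ^ (k-1) * (1/16)) 0 := by
    have h := hq.rpow_const (p := k) (Or.inl (by norm_num [h2]))
    rw [hq0] at h
    convert h using 1
    ring
  have hi : HasDerivAt (fun t : ℝ => k * t) k 0 := by
    simpa using (hasDerivAt_id (0:ℝ)).const_mul k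
  have he2 : HasDerivAt (fun t : ℝ => exp (k * t)) k 0 := by
    simpa using hi.exp
  have hrden : HasDerivAt (fun t : ℝ => exp (k * t) + exp (k * Real.log 2)) k 0 :=
    he2.add_const _
  have hrne : exp (k * (0:ℝ)) + exp (k * Real.log 2) ≠ 0 := by positivity
  have hr : HasDerivAt
      (fun t : ℝ => exp (k * Real.log 2) / (exp (k * t) + exp (k * Real.log 2)))
      (-(exp (k * Real.log 2) * k) / (1 + exp (k * Real.log 2)) ^ 2) 0 := by
    have h := (hasDerivAt_const (0:ℝ) (exp (k * Real.log 2))).div hrden hrne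
    refine h.congr_deriv ?_
    rw [mul_zero, Real.exp_zero]
    ring
  have h := hqk.mul hr
  refine h.congr_deriv ?_
  rw [hq0]
  rw [mul_zero, Real.exp_zero]

lemma pgNe (k : ℝ) (hk : 0 < k) (hk1 : k ≠ 1) :
    k * (3/4:ℝ) ^ (k-1) * (1/8) * (1 / (1 + exp (k * Real.log 2))) +
        (3/4) ^ k * (-(exp (k * Real.log 2) * k) / (1 + exp (k * Real.log 2)) ^ 2) ≠
      k * (3/4:ℝ) ^ (k-1) * (1/16) * (exp (k * Real.log 2) / (1 + exp (k * Real.log 2))) +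
        (3/4) ^ k * (-(exp (k * Real.log 2) * k) / (1 + exp (k * Real.log 2)) ^ 2) := by
  intro h
  set M := exp (k * Real.log 2) with hM
  set A := k * (3/4:ℝ) ^ (k-1) with hA
  have hMpos : 0 < M := Real.exp_pos _
  have hApos : 0 < A := mul_pos hk (Real.rpow_pos_of_pos (by norm_num) _)
  have h1M : (0:ℝ) < 1 + M := by linarith
  have h' : A * (1/8) * (1 / (1 + M)) = A * (1/16) * (M / (1 + M)) := by linarith
  have hdiff : A * (1/8) * (1 / (1 + M)) - A * (1/16) * (M / (1 + M)) =
      A * (2 - M) / (16 * (1 + M)) := by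
    field_simp
    ring
  have h0 : A * (2 - M) / (16 * (1 + M)) = 0 := by
    rw [← hdiff]; linarith
  have h1 : A * (2 - M) = 0 := by
    rcases div_eq_zero_iff.mp h0 with h | h
    · exact h
    · exfalso; nlinarith
  have hM2 : M = 2 := by
    rcases mul_eq_zero.mp h1 with h | h
    · exact absurd h hApos.ne'
    · linarith
  have hexp : exp (k * Real.log 2) = exp (Real.log 2) := by
    rw [← hM, hM2, pg_exp_log_two]
  have hlog : Real.log 2 ≠ 0 := ne_of_gt (Real.log_pos (by norm_num))
  have : k * Real.log 2 = 1 * Real.log 2 := by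
    rw [one_mul]; exact Real.exp_eq_exp.mp hexp
  exact hk1 (mul_right_cancel₀ hlog this)

theorem pseudoGradient_not_a_gradient (k : ℝ) (hk : 0 < k) (hk1 : k ≠ 1) :
    ¬ ∃ F : (Fin 3 → ℝ) → ℝ,
        (∀ w : Fin 3 → ℝ, DifferentiableAt ℝ F w) ∧
        ∀ (w : Fin 3 → ℝ) (j : Fin 3),
          fderiv ℝ F w (Pi.single j 1) = pseudoGrad k w j := by
  rintro ⟨F, hF, hpart⟩
  classical
  set pr : Fin 3 → (Fin 3 → ℝ) →L[ℝ] ℝ := fun j => ContinuousLinearMap.proj j with hpr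
  set L : (Fin 3 → ℝ) → ((Fin 3 → ℝ) →L[ℝ] ℝ) := fun w =>
    pgG0 k w • pr 0 + pgG1 k w • pr 1 + pgG2 k w • pr 2 with hLdef
  have hL_apply : ∀ (w : Fin 3 → ℝ) (j : Fin 3), L w (Pi.single j 1) = pseudoGrad k w j := by
    intro w j
    fin_cases j
    · simp [hLdef, hpr, ContinuousLinearMap.proj_apply, Pi.single_apply,
        pseudoGrad_zero]
    · simp [hLdef, hpr, ContinuousLinearMap.proj_apply, Pi.single_apply,
        pseudoGrad_one]
    · simp [hLdef, hpr, ContinuousLinearMap.proj_apply, Pi.single_apply,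
        pseudoGrad_two]
  have hfd : ∀ y, HasFDerivAt F (L y) y := by
    intro y
    have heq : fderiv ℝ F y = L y := by
      apply ContinuousLinearMap.coe_injective
      apply Module.Basis.ext (Pi.basisFun ℝ (Fin 3))
      intro j
      have hb : (Pi.basisFun ℝ (Fin 3)) j = Pi.single j 1 := by
        simp [Pi.basisFun_apply]
      rw [hb]
      show fderiv ℝ F y (Pi.single j 1) = L y (Pi.single j 1)
      rw [hpart y j, hL_apply]
    exact heq ▸ (hF y).hasFDerivAt
  set D1 := fderiv ℝ (pgG1 k) pgX with hD1
  set D2 := fderiv ℝ (pgG2 k) pgX with hD2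
  set D0 := fderiv ℝ (pgG0 k) pgX with hD0
  have hB : HasFDerivAt L
      (D0.smulRight (pr 0) + D1.smulRight (pr 1) + D2.smulRight (pr 2)) pgX := by
    exact (((pgG0_diff k pgX).hasFDerivAt.smul_const (pr 0)).add
      ((pgG1_diff k pgX).hasFDerivAt.smul_const (pr 1))).add
      ((pgG2_diff k pgX).hasFDerivAt.smul_const (pr 2))
  have hsym := second_derivative_symmetric hfd hB
    (Pi.single 2 1 : Fin 3 → ℝ) (Pi.single 1 1 : Fin 3 → ℝ)
  have hDD : D1 (Pi.single 2 1 : Fin 3 → ℝ) = D2 (Pi.single 1 1 : Fin 3 → ℝ) := by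
    simpa [hpr, ContinuousLinearMap.add_apply, ContinuousLinearMap.smulRight_apply,
      ContinuousLinearMap.proj_apply, Pi.single_apply] using hsym
  -- directional derivatives along lines
  have hline : ∀ v : Fin 3 → ℝ, HasDerivAt (fun t : ℝ => pgX + t • v) v 0 := by
    intro v
    simpa using ((hasDerivAt_id (0:ℝ)).smul_const v).const_add pgX
  have hdir : ∀ (G : (Fin 3 → ℝ) → ℝ) (hG : DifferentiableAt ℝ G pgX) (v : Fin 3 → ℝ),
      HasDerivAt (fun t : ℝ => G (pgX + t • v)) (fderiv ℝ G pgX v) 0 := by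
    intro G hG v
    have h0 : pgX + (0:ℝ) • v = pgX := by simp
    have hG' : HasFDerivAt G (fderiv ℝ G pgX) (pgX + (0:ℝ) • v) := by
      rw [h0]; exact hG.hasFDerivAt
    exact hG'.comp_hasDerivAt 0 (hline v)
  have hphi := hdir (pgG1 k) (pgG1_diff k pgX) (Pi.single 2 1)
  have hpsi := hdir (pgG2 k) (pgG2_diff k pgX) (Pi.single 1 1)
  rw [pgPhi_eq k] at hphi
  rw [pgPsi_eq k] at hpsi
  have ha1 : D1 (Pi.single 2 1 : Fin 3 → ℝ) =
      k * (3/4) ^ (k-1) * (1/8) * (1 / (1 + exp (k * Real.log 2))) +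
        (3/4) ^ k * (-(exp (k * Real.log 2) * k) / (1 + exp (k * Real.log 2)) ^ 2) :=
    hphi.unique (pgDerivPhi k)
  have ha2 : D2 (Pi.single 1 1 : Fin 3 → ℝ) =
      k * (3/4) ^ (k-1) * (1/16) * (exp (k * Real.log 2) / (1 + exp (k * Real.log 2))) +
        (3/4) ^ k * (-(exp (k * Real.log 2) * k) / (1 + exp (k * Real.log 2)) ^ 2) :=
    hpsi.unique (pgDerivPsi k)
  exact pgNe k hk hk1 (ha1 ▸ ha2 ▸ hDD)
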